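/- On L²(ℝ²) with coordinates (t₁,t₂), fix a ∈ ℝ \ {0} and b ∈ ℝ, and define the operators A₁ = ia, A₂ = i t₁, A₃ = i t₂, A₄ = a ∂/∂t₂, A₅ = (1/a)(−a² ∂/∂t₁ − i t₁ t₂), A₆ = (1/(6a²))(6a² t₁ ∂/∂t₂ + 6iab − 3ia t₂² + 2i t₁³) acting on Schwartz functions. Then these operators satisfy the commutation relations [A₆,A₅]=A₄, [A₆,A₄]=A₃, [A₆,A₃]=A₂, [A₅,A₄]=A₂, [A₅,A₂]=−A₁, [A₄,A₃]=A₁, and all other commutators [Aᵢ,Aⱼ] for i > j vanish. -/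

import Mathlib

open Complex

/-- Partial derivative in the first variable. -/
noncomputable def pd1 (f : ℝ × ℝ → ℂ) : ℝ × ℝ → ℂ :=
  fun p => deriv (fun s => f (s, p.2)) p.1

/-- Partial derivative in the second variable. -/
noncomputable def pd2 (f : ℝ × ℝ → ℂ) : ℝ × ℝ → ℂ :=
  fun p => deriv (fun s => f (p.1, s)) p.2

/-- The six operators `A₁, …, A₆` (0-indexed) of the representation `dπ`:
`A₁ = ia`, `A₂ = it₁`, `A₃ = it₂`, `A₄ = a ∂/∂t₂`,
`A₅ = (1/a)(−a²∂/∂t₁ − it₁t₂)`,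
`A₆ = (1/(6a²))(6a²t₁∂/∂t₂ + 6iab − 3iat₂² + 2it₁³)`. -/
noncomputable def opA (a b : ℝ) : Fin 6 → (ℝ × ℝ → ℂ) → (ℝ × ℝ → ℂ) :=
  ![fun f p => I * a * f p,
    fun f p => I * p.1 * f p,
    fun f p => I * p.2 * f p,
    fun f p => a * pd2 f p,
    fun f p => (1 / (a : ℂ)) * (-(a : ℂ) ^ 2 * pd1 f p - I * p.1 * p.2 * f p),
    fun f p => (1 / (6 * (a : ℂ) ^ 2)) *
      (6 * (a : ℂ) ^ 2 * (p.1 : ℂ) * pd2 f p + 6 * I * a * b * f p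
        - 3 * I * a * (p.2 : ℂ) ^ 2 * f p + 2 * I * (p.1 : ℂ) ^ 3 * f p)]

/-- The commutator `[S, T] = S∘T − T∘S` of two operators. -/
noncomputable def opComm (S T : (ℝ × ℝ → ℂ) → (ℝ × ℝ → ℂ))
    (f : ℝ × ℝ → ℂ) : ℝ × ℝ → ℂ :=
  S (T f) - T (S f)

section Aux

/-- Slice derivative in the first variable, as a `HasDerivAt`. -/
lemma hasDerivAt_slice1 {g : ℝ × ℝ → ℂ} (hg : Differentiable ℝ g) (p : ℝ × ℝ) :
    HasDerivAt (fun s => g (s, p.2)) (fderiv ℝ g p ((1:ℝ), (0:ℝ))) p.1 := by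
  simpa [Function.comp_def] using (hg p).hasFDerivAt.comp_hasDerivAt p.1
    ((hasDerivAt_id p.1).prodMk (hasDerivAt_const p.1 p.2))

/-- Slice derivative in the second variable, as a `HasDerivAt`. -/
lemma hasDerivAt_slice2 {g : ℝ × ℝ → ℂ} (hg : Differentiable ℝ g) (p : ℝ × ℝ) :
    HasDerivAt (fun s => g (p.1, s)) (fderiv ℝ g p ((0:ℝ), (1:ℝ))) p.2 := by
  simpa [Function.comp_def] using (hg p).hasFDerivAt.comp_hasDerivAt p.2
    ((hasDerivAt_const p.2 p.1).prodMk (hasDerivAt_id p.2))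

lemma pd1_eq {g : ℝ × ℝ → ℂ} (hg : Differentiable ℝ g) (p : ℝ × ℝ) :
    pd1 g p = fderiv ℝ g p ((1:ℝ), (0:ℝ)) := (hasDerivAt_slice1 hg p).deriv

lemma pd2_eq {g : ℝ × ℝ → ℂ} (hg : Differentiable ℝ g) (p : ℝ × ℝ) :
    pd2 g p = fderiv ℝ g p ((0:ℝ), (1:ℝ)) := (hasDerivAt_slice2 hg p).deriv

lemma hasDerivAt_pd1 {g : ℝ × ℝ → ℂ} (hg : Differentiable ℝ g) (p : ℝ × ℝ) :
    HasDerivAt (fun s => g (s, p.2)) (pd1 g p) p.1 := by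
  rw [pd1_eq hg p]; exact hasDerivAt_slice1 hg p

lemma hasDerivAt_pd2 {g : ℝ × ℝ → ℂ} (hg : Differentiable ℝ g) (p : ℝ × ℝ) :
    HasDerivAt (fun s => g (p.1, s)) (pd2 g p) p.2 := by
  rw [pd2_eq hg p]; exact hasDerivAt_slice2 hg p

lemma contDiff_pd1 {g : ℝ × ℝ → ℂ} (hg : ContDiff ℝ ((⊤:ℕ∞)) g) :
    ContDiff ℝ ((⊤:ℕ∞)) (pd1 g) := by
  have e : pd1 g = fun p => fderiv ℝ g p ((1:ℝ), (0:ℝ)) :=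
    funext fun p => pd1_eq (hg.differentiable (by simp)) p
  rw [e]
  exact (hg.fderiv_right (m := (⊤:ℕ∞)) le_rfl).clm_apply contDiff_const

lemma contDiff_pd2 {g : ℝ × ℝ → ℂ} (hg : ContDiff ℝ ((⊤:ℕ∞)) g) :
    ContDiff ℝ ((⊤:ℕ∞)) (pd2 g) := by
  have e : pd2 g = fun p => fderiv ℝ g p ((0:ℝ), (1:ℝ)) :=
    funext fun p => pd2_eq (hg.differentiable (by simp)) p
  rw [e]
  exact (hg.fderiv_right (m := (⊤:ℕ∞)) le_rfl).clm_apply contDiff_const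

/-- Clairaut: the mixed partials agree for smooth functions. -/
lemma pd_comm {g : ℝ × ℝ → ℂ} (hg : ContDiff ℝ ((⊤:ℕ∞)) g) :
    pd2 (pd1 g) = pd1 (pd2 g) := by
  have hdg : Differentiable ℝ g := hg.differentiable (by simp)
  have hfd : ContDiff ℝ ((⊤:ℕ∞)) (fderiv ℝ g) := hg.fderiv_right (m := (⊤:ℕ∞)) le_rfl
  have hfdd : Differentiable ℝ (fderiv ℝ g) :=
    hfd.differentiable (by simp)
  funext p
  have e1 : pd1 g = fun q => fderiv ℝ g q ((1:ℝ), (0:ℝ)) := funext fun q => pd1_eq hdg q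
  have e2 : pd2 g = fun q => fderiv ℝ g q ((0:ℝ), (1:ℝ)) := funext fun q => pd2_eq hdg q
  have d1 : Differentiable ℝ (pd1 g) :=
    (contDiff_pd1 hg).differentiable (by simp)
  have d2 : Differentiable ℝ (pd2 g) :=
    (contDiff_pd2 hg).differentiable (by simp)
  have F : ∀ v : ℝ × ℝ, fderiv ℝ (fun q => fderiv ℝ g q v) p
      = (fderiv ℝ (fderiv ℝ g) p).flip v := by
    intro v
    have := fderiv_clm_apply (c := fderiv ℝ g) (u := fun _ => v) (hfdd p)
      (differentiableAt_const v)
    simpa using this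
  have sy : fderiv ℝ (fderiv ℝ g) p ((0:ℝ),(1:ℝ)) ((1:ℝ),(0:ℝ))
      = fderiv ℝ (fderiv ℝ g) p ((1:ℝ),(0:ℝ)) ((0:ℝ),(1:ℝ)) :=
    (hg.contDiffAt.isSymmSndFDerivAt (by rw [minSmoothness_of_isRCLikeNormedField]; exact WithTop.coe_le_coe.mpr le_top)) _ _
  calc pd2 (pd1 g) p = fderiv ℝ (pd1 g) p ((0:ℝ),(1:ℝ)) := pd2_eq d1 p
    _ = fderiv ℝ (fun q => fderiv ℝ g q ((1:ℝ),(0:ℝ))) p ((0:ℝ),(1:ℝ)) := by rw [← e1]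
    _ = fderiv ℝ (fderiv ℝ g) p ((0:ℝ),(1:ℝ)) ((1:ℝ),(0:ℝ)) := by rw [F]; rfl
    _ = fderiv ℝ (fderiv ℝ g) p ((1:ℝ),(0:ℝ)) ((0:ℝ),(1:ℝ)) := sy
    _ = fderiv ℝ (fun q => fderiv ℝ g q ((0:ℝ),(1:ℝ))) p ((1:ℝ),(0:ℝ)) := by rw [F]; rfl
    _ = fderiv ℝ (pd2 g) p ((1:ℝ),(0:ℝ)) := by rw [← e2]
    _ = pd1 (pd2 g) p := (pd1_eq d2 p).symm

lemma hasDerivAt_ofRealC (x : ℝ) : HasDerivAt (fun s : ℝ => (s : ℂ)) 1 x := by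
  simpa using (hasDerivAt_id x).ofReal_comp

end Aux

/-- On Schwartz functions on `ℝ²`, the operators `A₁, …, A₆` satisfy
`[A₆,A₅]=A₄`, `[A₆,A₄]=A₃`, `[A₆,A₃]=A₂`, `[A₅,A₄]=A₂`, `[A₅,A₂]=−A₁`,
`[A₄,A₃]=A₁`, and all other commutators `[Aᵢ,Aⱼ]` with `i > j` vanish; thus they
realize the 6-dimensional 4-step nilpotent Lie algebra of the paper. -/
theorem schwartz_operators_commutation (a b : ℝ) (ha : a ≠ 0)
    (f : SchwartzMap (ℝ × ℝ) ℂ) :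
    opComm (opA a b 5) (opA a b 4) ⇑f = opA a b 3 ⇑f ∧
    opComm (opA a b 5) (opA a b 3) ⇑f = opA a b 2 ⇑f ∧
    opComm (opA a b 5) (opA a b 2) ⇑f = opA a b 1 ⇑f ∧
    opComm (opA a b 4) (opA a b 3) ⇑f = opA a b 1 ⇑f ∧
    opComm (opA a b 4) (opA a b 1) ⇑f = - opA a b 0 ⇑f ∧
    opComm (opA a b 3) (opA a b 2) ⇑f = opA a b 0 ⇑f ∧
    ∀ i j : Fin 6, j < i →
      (i, j) ∉ ({(5, 4), (5, 3), (5, 2), (4, 3), (4, 1), (3, 2)} :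
        Set (Fin 6 × Fin 6)) →
      opComm (opA a b i) (opA a b j) ⇑f = 0 := by
  have haC : (a : ℂ) ≠ 0 := Complex.ofReal_ne_zero.mpr ha
  have hsm : ContDiff ℝ ((⊤:ℕ∞)) ⇑f := f.smooth ⊤
  have hfd : Differentiable ℝ ⇑f := hsm.differentiable (by simp)
  have h1d : Differentiable ℝ (pd1 ⇑f) :=
    (contDiff_pd1 hsm).differentiable (by simp)
  have h2d : Differentiable ℝ (pd2 ⇑f) :=
    (contDiff_pd2 hsm).differentiable (by simp)
  have h22d : Differentiable ℝ (pd2 (pd2 ⇑f)) :=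
    (contDiff_pd2 (contDiff_pd2 hsm)).differentiable (by simp)
  have hcomm : pd2 (pd1 ⇑f) = pd1 (pd2 ⇑f) := pd_comm hsm
  -- pd computations
  have E1 : ∀ p : ℝ × ℝ, pd2 (fun q => I * (a:ℂ) * f q) p = I * (a:ℂ) * pd2 ⇑f p :=
    fun p => ((hasDerivAt_pd2 hfd p).const_mul (I * (a:ℂ))).deriv
  have E2 : ∀ p : ℝ × ℝ, pd1 (fun q => I * (a:ℂ) * f q) p = I * (a:ℂ) * pd1 ⇑f p :=
    fun p => ((hasDerivAt_pd1 hfd p).const_mul (I * (a:ℂ))).deriv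
  have E3 : ∀ p : ℝ × ℝ, pd2 (fun q => I * (q.1:ℂ) * f q) p = I * (p.1:ℂ) * pd2 ⇑f p :=
    fun p => ((hasDerivAt_pd2 hfd p).const_mul (I * (p.1:ℂ))).deriv
  have E4 : ∀ p : ℝ × ℝ, pd1 (fun q => I * (q.2:ℂ) * f q) p = I * (p.2:ℂ) * pd1 ⇑f p :=
    fun p => ((hasDerivAt_pd1 hfd p).const_mul (I * (p.2:ℂ))).deriv
  have E5 : ∀ p : ℝ × ℝ, pd2 (fun q => I * (q.2:ℂ) * f q) p
      = I * f p + I * (p.2:ℂ) * pd2 ⇑f p := by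
    intro p
    have hc : HasDerivAt (fun s : ℝ => I * (s:ℂ)) I p.2 := by
      simpa using (hasDerivAt_ofRealC p.2).const_mul I
    have h := hc.mul (hasDerivAt_pd2 hfd p)
    have e : I * f p + I * (p.2:ℂ) * pd2 ⇑f p
        = I * f (p.1, p.2) + I * (p.2:ℂ) * pd2 ⇑f p := rfl
    rw [e]
    exact h.deriv
  have E6 : ∀ p : ℝ × ℝ, pd1 (fun q => I * (q.1:ℂ) * f q) p
      = I * f p + I * (p.1:ℂ) * pd1 ⇑f p := by
    intro p
    have hc : HasDerivAt (fun s : ℝ => I * (s:ℂ)) I p.1 := by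
      simpa using (hasDerivAt_ofRealC p.1).const_mul I
    exact (hc.mul (hasDerivAt_pd1 hfd p)).deriv
  have E7 : ∀ p : ℝ × ℝ, pd1 (fun q => (a:ℂ) * pd2 ⇑f q) p = (a:ℂ) * pd1 (pd2 ⇑f) p :=
    fun p => ((hasDerivAt_pd1 h2d p).const_mul (a:ℂ)).deriv
  have E12 : ∀ p : ℝ × ℝ, pd2 (fun q => (a:ℂ) * pd2 ⇑f q) p = (a:ℂ) * pd2 (pd2 ⇑f) p :=
    fun p => ((hasDerivAt_pd2 h2d p).const_mul (a:ℂ)).deriv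
  -- pd2 of A₅ f
  have E8 : ∀ p : ℝ × ℝ, pd2 (fun q =>
        (1 / (a : ℂ)) * (-(a : ℂ) ^ 2 * pd1 ⇑f q - I * q.1 * q.2 * f q)) p
      = (1 / (a : ℂ)) * (-(a:ℂ)^2 * pd2 (pd1 ⇑f) p
          - (I * (p.1:ℂ) * f p + I * (p.1:ℂ) * (p.2:ℂ) * pd2 ⇑f p)) := by
    intro p
    have hc : HasDerivAt (fun s : ℝ => I * (p.1:ℂ) * (s:ℂ)) (I * (p.1:ℂ)) p.2 := by
      simpa using (hasDerivAt_ofRealC p.2).const_mul (I * (p.1:ℂ))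
    exact ((((hasDerivAt_pd2 h1d p).const_mul (-(a:ℂ)^2)).sub
      (hc.mul (hasDerivAt_pd2 hfd p))).const_mul (1 / (a:ℂ))).deriv
  -- pd1 of A₆ f
  have E10 : ∀ p : ℝ × ℝ, pd1 (fun q => (1 / (6 * (a : ℂ) ^ 2)) *
        (6 * (a : ℂ) ^ 2 * (q.1 : ℂ) * pd2 ⇑f q + 6 * I * a * b * f q
          - 3 * I * a * (q.2 : ℂ) ^ 2 * f q + 2 * I * (q.1 : ℂ) ^ 3 * f q)) p
      = (1 / (6 * (a : ℂ) ^ 2)) *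
        ((6 * (a:ℂ)^2 * pd2 ⇑f p + 6 * (a:ℂ)^2 * (p.1:ℂ) * pd1 (pd2 ⇑f) p)
          + 6 * I * (a:ℂ) * (b:ℂ) * pd1 ⇑f p
          - 3 * I * (a:ℂ) * (p.2:ℂ)^2 * pd1 ⇑f p
          + (6 * I * (p.1:ℂ)^2 * f p + 2 * I * (p.1:ℂ)^3 * pd1 ⇑f p)) := by
    intro p
    have hc1 : HasDerivAt (fun s : ℝ => 6 * (a:ℂ)^2 * (s:ℂ)) (6 * (a:ℂ)^2) p.1 := by
      simpa using (hasDerivAt_ofRealC p.1).const_mul (6 * (a:ℂ)^2)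
    have hc2 : HasDerivAt (fun s : ℝ => 2 * I * ((s:ℂ))^3) (6 * I * (p.1:ℂ)^2) p.1 := by
      have h := ((hasDerivAt_pow 3 ((p.1 : ℝ) : ℂ)).comp_ofReal).const_mul (2 * I)
      have e : (6 : ℂ) * I * (p.1:ℂ)^2 = 2 * I * ((3:ℕ) * ((p.1:ℝ):ℂ)^(3-1)) := by
        push_cast; ring
      rw [e]; exact h
    have ht1 := hc1.mul (hasDerivAt_pd1 h2d p)
    have ht2 := (hasDerivAt_pd1 hfd p).const_mul (6 * I * (a:ℂ) * (b:ℂ))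
    have ht3 := (hasDerivAt_pd1 hfd p).const_mul (3 * I * (a:ℂ) * (p.2:ℂ)^2)
    have ht4 := hc2.mul (hasDerivAt_pd1 hfd p)
    exact ((((ht1.add ht2).sub ht3).add ht4).const_mul (1 / (6 * (a:ℂ)^2))).deriv
  -- pd2 of A₆ f
  have E11 : ∀ p : ℝ × ℝ, pd2 (fun q => (1 / (6 * (a : ℂ) ^ 2)) *
        (6 * (a : ℂ) ^ 2 * (q.1 : ℂ) * pd2 ⇑f q + 6 * I * a * b * f q
          - 3 * I * a * (q.2 : ℂ) ^ 2 * f q + 2 * I * (q.1 : ℂ) ^ 3 * f q)) p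
      = (1 / (6 * (a : ℂ) ^ 2)) *
        ((6 * (a:ℂ)^2 * (p.1:ℂ)) * pd2 (pd2 ⇑f) p
          + (6 * I * (a:ℂ) * (b:ℂ)) * pd2 ⇑f p
          - (6 * I * (a:ℂ) * (p.2:ℂ) * f p
              + 3 * I * (a:ℂ) * (p.2:ℂ)^2 * pd2 ⇑f p)
          + (2 * I * (p.1:ℂ)^3) * pd2 ⇑f p) := by
    intro p
    have hc3 : HasDerivAt (fun s : ℝ => 3 * I * (a:ℂ) * ((s:ℂ))^2)
        (6 * I * (a:ℂ) * (p.2:ℂ)) p.2 := by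
      have h := ((hasDerivAt_pow 2 ((p.2 : ℝ) : ℂ)).comp_ofReal).const_mul (3 * I * (a:ℂ))
      have e : (6 : ℂ) * I * (a:ℂ) * (p.2:ℂ) = 3 * I * (a:ℂ) * ((2:ℕ) * ((p.2:ℝ):ℂ)^(2-1)) := by
        push_cast; ring
      rw [e]; exact h
    have ht1 := (hasDerivAt_pd2 h2d p).const_mul (6 * (a:ℂ)^2 * (p.1:ℂ))
    have ht2 := (hasDerivAt_pd2 hfd p).const_mul (6 * I * (a:ℂ) * (b:ℂ))
    have ht3 := hc3.mul (hasDerivAt_pd2 hfd p)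
    have ht4 := (hasDerivAt_pd2 hfd p).const_mul (2 * I * (p.1:ℂ)^3)
    exact ((((ht1.add ht2).sub ht3).add ht4).const_mul (1 / (6 * (a:ℂ)^2))).deriv
  -- unfolded forms of the operators
  have u0 : opA a b 0 = fun f p => I * a * f p := rfl
  have u1 : opA a b 1 = fun f p => I * p.1 * f p := rfl
  have u2 : opA a b 2 = fun f p => I * p.2 * f p := rfl
  have u3 : opA a b 3 = fun f p => a * pd2 f p := rfl
  have u4 : opA a b 4 = fun f p =>
      (1 / (a : ℂ)) * (-(a : ℂ) ^ 2 * pd1 f p - I * p.1 * p.2 * f p) := rfl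
  have u5 : opA a b 5 = fun f p => (1 / (6 * (a : ℂ) ^ 2)) *
      (6 * (a : ℂ) ^ 2 * (p.1 : ℂ) * pd2 f p + 6 * I * a * b * f p
        - 3 * I * a * (p.2 : ℂ) ^ 2 * f p + 2 * I * (p.1 : ℂ) ^ 3 * f p) := rfl
  have ha6 : (6 : ℂ) * (a:ℂ)^2 ≠ 0 :=
    mul_ne_zero (by norm_num) (pow_ne_zero 2 haC)
  -- the six structural relations
  have R54 : opComm (opA a b 5) (opA a b 4) ⇑f = opA a b 3 ⇑f := by
    funext p
    simp only [opComm, Pi.sub_apply, u3, u4, u5]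
    rw [E8 p, E10 p, hcomm]
    field_simp
    ring
  have R53 : opComm (opA a b 5) (opA a b 3) ⇑f = opA a b 2 ⇑f := by
    funext p
    simp only [opComm, Pi.sub_apply, u2, u3, u5]
    rw [E12 p, E11 p]
    field_simp
    ring
  have R52 : opComm (opA a b 5) (opA a b 2) ⇑f = opA a b 1 ⇑f := by
    funext p
    simp only [opComm, Pi.sub_apply, u1, u2, u5]
    rw [E5 p]
    field_simp
    ring
  have R43 : opComm (opA a b 4) (opA a b 3) ⇑f = opA a b 1 ⇑f := by
    funext p
    simp only [opComm, Pi.sub_apply, u1, u3, u4]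
    rw [E7 p, E8 p, hcomm]
    field_simp
    ring
  have R41 : opComm (opA a b 4) (opA a b 1) ⇑f = - opA a b 0 ⇑f := by
    funext p
    simp only [opComm, Pi.sub_apply, Pi.neg_apply, u0, u1, u4]
    rw [E6 p]
    field_simp
    ring
  have R32 : opComm (opA a b 3) (opA a b 2) ⇑f = opA a b 0 ⇑f := by
    funext p
    simp only [opComm, Pi.sub_apply, u0, u2, u3]
    rw [E5 p]
    ring
  -- the vanishing commutators
  have Z10 : opComm (opA a b 1) (opA a b 0) ⇑f = 0 := by
    funext p
    simp only [opComm, Pi.sub_apply, Pi.zero_apply, u0, u1]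
    ring
  have Z20 : opComm (opA a b 2) (opA a b 0) ⇑f = 0 := by
    funext p
    simp only [opComm, Pi.sub_apply, Pi.zero_apply, u0, u2]
    ring
  have Z21 : opComm (opA a b 2) (opA a b 1) ⇑f = 0 := by
    funext p
    simp only [opComm, Pi.sub_apply, Pi.zero_apply, u1, u2]
    ring
  have Z30 : opComm (opA a b 3) (opA a b 0) ⇑f = 0 := by
    funext p
    simp only [opComm, Pi.sub_apply, Pi.zero_apply, u0, u3]
    rw [E1 p]
    ring
  have Z31 : opComm (opA a b 3) (opA a b 1) ⇑f = 0 := by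
    funext p
    simp only [opComm, Pi.sub_apply, Pi.zero_apply, u1, u3]
    rw [E3 p]
    ring
  have Z40 : opComm (opA a b 4) (opA a b 0) ⇑f = 0 := by
    funext p
    simp only [opComm, Pi.sub_apply, Pi.zero_apply, u0, u4]
    rw [E2 p]
    ring
  have Z42 : opComm (opA a b 4) (opA a b 2) ⇑f = 0 := by
    funext p
    simp only [opComm, Pi.sub_apply, Pi.zero_apply, u2, u4]
    rw [E4 p]
    ring
  have Z50 : opComm (opA a b 5) (opA a b 0) ⇑f = 0 := by
    funext p
    simp only [opComm, Pi.sub_apply, Pi.zero_apply, u0, u5]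
    rw [E1 p]
    ring
  have Z51 : opComm (opA a b 5) (opA a b 1) ⇑f = 0 := by
    funext p
    simp only [opComm, Pi.sub_apply, Pi.zero_apply, u1, u5]
    rw [E3 p]
    ring
  refine ⟨R54, R53, R52, R43, R41, R32, ?_⟩
  intro i j hij hne
  fin_cases i <;> fin_cases j <;>
    try first
      | exact absurd hij (by decide)
      | (exfalso; apply hne; simp; done)
  exact Z10
  exact Z20
  exact Z21
  exact Z30
  exact Z31
  exact Z40
  exact Z42
  exact Z50
  exact Z51
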